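/- For every graph G, the edge-treewidth of G is at most Δ₂(G)·tw(G), where Δ₂(G) is the biconnected maximum degree of G (the maximum, over 2-connected components C of G, of the maximum degree of C) and tw(G) is the treewidth of G. -/

import Mathlib

open SimpleGraph

/-- `x` is a (reflexive) ancestor of `y` in the tree `T` rooted at `r`,
expressed metrically: `x` lies on the unique `r`–`y` path. -/
def AncIn {V : Type*} (T : SimpleGraph V) (r x y : V) : Prop :=
  T.dist r x + T.dist x y = T.dist r y

/-- A tree-layout of `G`: a rooted tree on the vertex set of `G` such that the endpoints
of every edge of `G` are in ancestor-descendant relation. -/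
structure TreeLayout {V : Type*} (G : SimpleGraph V) where
  tree : SimpleGraph V
  isTree : tree.IsTree
  root : V
  layout : ∀ ⦃x y : V⦄, G.Adj x y → AncIn tree root x y ∨ AncIn tree root y x

namespace TreeLayout

variable {V : Type*} {G : SimpleGraph V}

/-- `x` is an ancestor of `y` (reflexively) in the tree-layout. -/
def Anc (L : TreeLayout G) (x y : V) : Prop := AncIn L.tree L.root x y

def StrictAnc (L : TreeLayout G) (x y : V) : Prop := L.Anc x y ∧ x ≠ y

/-- The bandwidth of the tree-layout is at most `k`: neighbours in `G` are at
tree-distance at most `k`. -/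
def BandwidthLE (L : TreeLayout G) (k : ℕ) : Prop :=
  ∀ ⦃x y : V⦄, G.Adj x y → L.tree.dist x y ≤ k

/-- The interval `[a,b]` of the tree-layout: vertices on the tree path from `a` to `b`
(for `a` an ancestor of `b`). -/
def interval (L : TreeLayout G) (a b : V) : Set V := {z : V | L.Anc a z ∧ L.Anc z b}

end TreeLayout

/-- Treebandwidth: the minimum bandwidth over tree-layouts of `G`. -/
noncomputable def treebandwidth {V : Type*} (G : SimpleGraph V) : ℕ :=
  sInf {k | ∃ L : TreeLayout G, L.BandwidthLE k}

/-- Treedepth: the minimum depth (number of vertices on a root-to-leaf path) of a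
tree-layout (elimination tree) of `G`. -/
noncomputable def treedepth {V : Type*} (G : SimpleGraph V) : ℕ :=
  sInf {k | ∃ L : TreeLayout G, ∀ v : V, L.tree.dist L.root v + 1 ≤ k}

/-- A tree-partition of `G`: a partition of `V(G)` indexed by the nodes of a tree such that
every edge of `G` has both ends in one part or in parts indexed by adjacent nodes. -/
structure TreePartition {V : Type*} (G : SimpleGraph V) where
  ι : Type
  tree : SimpleGraph ι
  isTree : tree.IsTree
  part : V → ι
  adj : ∀ ⦃x y : V⦄, G.Adj x y → part x = part y ∨ tree.Adj (part x) (part y)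

/-- Tree-partition-width: minimum over tree-partitions of the maximum part size. -/
noncomputable def treePartitionWidth {V : Type*} (G : SimpleGraph V) : ℕ :=
  sInf {k | ∃ P : TreePartition G, ∀ i : P.ι, {v : V | P.part v = i}.ncard ≤ k}

/-- The connected component of `v` in the subgraph of `G` induced by `S`. -/
def connCompIn {V : Type*} (G : SimpleGraph V) (S : Set V) (v : V) : Set V :=
  {w : V | ∃ (hv : v ∈ S) (hw : w ∈ S), (G.induce S).Reachable ⟨v, hv⟩ ⟨w, hw⟩}

/-- `RootedTreedepthLE G U S n` expresses `td(G[S], U) ≤ n` for the rooted treedepth: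
it is `0` when `S` misses `U`, and otherwise one may delete one vertex from each
connected component and recurse. -/
inductive RootedTreedepthLE {V : Type*} (G : SimpleGraph V) (U : Set V) : Set V → ℕ → Prop
  | base (S : Set V) (n : ℕ) (h : S ∩ U = ∅) : RootedTreedepthLE G U S n
  | step (S : Set V) (n : ℕ) (pick : ∀ v : V, v ∈ S → V)
      (hpick : ∀ (v : V) (hv : v ∈ S), pick v hv ∈ connCompIn G S v)
      (h : ∀ (v : V) (hv : v ∈ S),
        RootedTreedepthLE G U (connCompIn G S v \ {pick v hv}) n) :
      RootedTreedepthLE G U S (n + 1)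

/-- A `U`-rooted minor model of the path on `k` vertices in `G`. -/
structure RootedPathMinor {V : Type*} (G : SimpleGraph V) (U : Set V) (k : ℕ) where
  branch : Fin k → Set V
  connected : ∀ i, (G.induce (branch i)).Connected
  disjoint : ∀ i j, i ≠ j → Disjoint (branch i) (branch j)
  rooted : ∀ i, (branch i ∩ U).Nonempty
  adj : ∀ i j : Fin k, (j : ℕ) = (i : ℕ) + 1 → ∃ a ∈ branch i, ∃ b ∈ branch j, G.Adj a b

/-- A subdivision of the `k`-fan in `G` with universal (center) vertex `v`:
branch vertices `b 0, …, b (k-1)` of the path, internally disjoint spokes from `v`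
and internally disjoint path segments between consecutive branch vertices. -/
structure FanSubdivision {V : Type*} (G : SimpleGraph V) (v : V) (k : ℕ) where
  b : Fin k → V
  binj : Function.Injective b
  bne : ∀ i, b i ≠ v
  spoke : ∀ i : Fin k, G.Walk v (b i)
  spokePath : ∀ i, (spoke i).IsPath
  seg : ∀ (i : Fin k) (h : (i : ℕ) + 1 < k), G.Walk (b i) (b ⟨(i : ℕ) + 1, h⟩)
  segPath : ∀ i h, (seg i h).IsPath
  vNotinSeg : ∀ i h, v ∉ (seg i h).support
  spokeDisj : ∀ i j, i ≠ j →
    {x | x ∈ (spoke i).support} ∩ {x | x ∈ (spoke j).support} = {v}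
  spokeSegDisj : ∀ i j h,
    {x | x ∈ (spoke i).support} ∩ {x | x ∈ (seg j h).support} ⊆
      ({b i} : Set V) ∩ {b j, b ⟨(j : ℕ) + 1, h⟩}
  segDisj : ∀ i j hi hj, i ≠ j →
    {x | x ∈ (seg i hi).support} ∩ {x | x ∈ (seg j hj).support} ⊆
      ({b i, b ⟨(i : ℕ) + 1, hi⟩} : Set V) ∩ {b j, b ⟨(j : ℕ) + 1, hj⟩}

/-- A `p`-centered colouring: every (nonempty) connected induced subgraph either receives
more than `p` colours or has a uniquely coloured vertex. -/
def IsPCenteredColoring {V : Type*} (G : SimpleGraph V) (p : ℕ) (c : V → ℕ) : Prop :=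
  ∀ S : Set V, S.Nonempty → (G.induce S).Connected →
    p < (c '' S).ncard ∨ ∃ x ∈ S, ∀ y ∈ S, c y = c x → y = x

/-- Treewidth, characterised via tree-layouts: the minimum over tree-layouts of the maximum
over nodes `u` of the number of strict ancestors of `u` that are `G`-neighbours of some
descendant of `u` (including `u`). -/
noncomputable def treewidthTL {V : Type*} (G : SimpleGraph V) : ℕ :=
  sInf {k | ∃ L : TreeLayout G, ∀ u : V,
    {a : V | L.StrictAnc a u ∧ ∃ d : V, L.Anc u d ∧ G.Adj a d}.ncard ≤ k}

/-- The pruned subtree of `x` in a tree-layout: descendants of `x` (including `x`) having a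
neighbour of `x` among their own descendants. -/
def prunedSubtree {V : Type*} {G : SimpleGraph V} (L : TreeLayout G) (x : V) : Set V :=
  {y : V | L.Anc x y ∧ ∃ d : V, L.Anc y d ∧ G.Adj x d}

/-- Treespan: the minimum over tree-layouts of (maximum size of a pruned subtree minus one). -/
noncomputable def treespan {V : Type*} (G : SimpleGraph V) : ℕ :=
  sInf {k | ∃ L : TreeLayout G, ∀ x : V, (prunedSubtree L x).ncard ≤ k + 1}

/-- A tree decomposition of `G`. -/
structure TreeDecomp {V : Type*} (G : SimpleGraph V) where
  ι : Type
  tree : SimpleGraph ι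
  isTree : tree.IsTree
  bag : ι → Set V
  coverV : ∀ v : V, ∃ t, v ∈ bag t
  coverE : ∀ ⦃x y : V⦄, G.Adj x y → ∃ t, x ∈ bag t ∧ y ∈ bag t
  subtree : ∀ v : V, (tree.induce {t : ι | v ∈ bag t}).Connected

/-- Domino treewidth: minimum width over tree decompositions in which every vertex
belongs to at most two bags. -/
noncomputable def dominoTreewidth {V : Type*} (G : SimpleGraph V) : ℕ :=
  sInf {k | ∃ D : TreeDecomp G, (∀ v : V, {t : D.ι | v ∈ D.bag t}.ncard ≤ 2) ∧
    ∀ t : D.ι, (D.bag t).ncard ≤ k + 1}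

/-- Edge-treewidth via tree-layouts: the minimum over tree-layouts of the maximum over nodes
`u` of the number of edges with one endpoint a descendant of `u` (including `u`) and the other
a strict ancestor of `u`. -/
noncomputable def edgeTreewidth {V : Type*} (G : SimpleGraph V) : ℕ :=
  sInf {k | ∃ L : TreeLayout G, ∀ u : V,
    {p : V × V | L.StrictAnc p.1 u ∧ L.Anc u p.2 ∧ G.Adj p.1 p.2}.ncard ≤ k}

/-- `S` is a block (2-connected component) of `G`: a maximal connected set of vertices whose
induced subgraph has no cutvertex. -/
def IsBlock {V : Type*} (G : SimpleGraph V) (S : Set V) : Prop :=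
  S.Nonempty ∧ (G.induce S).Connected ∧
    (∀ x ∈ S, (G.induce (S \ {x})).Preconnected) ∧
    ∀ S' : Set V, S ⊆ S' → (G.induce S').Connected →
      (∀ x ∈ S', (G.induce (S' \ {x})).Preconnected) → S' = S

/-- Biconnected maximum degree: the maximum over blocks of `G` of the maximum degree
inside the block. -/
noncomputable def biconnMaxDegree {V : Type*} (G : SimpleGraph V) : ℕ :=
  sSup {d | ∃ (S : Set V) (v : V), IsBlock G S ∧ v ∈ S ∧ d = {w ∈ S | G.Adj v w}.ncard}

/-- `G` is 3-connected: more than 3 vertices, and removing any two vertices leaves it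
connected. -/
def ThreeConnected {V : Type*} (G : SimpleGraph V) : Prop :=
  3 < Nat.card V ∧ ∀ x y : V, (G.induce {v : V | v ≠ x ∧ v ≠ y}).Connected

/-- `G` has `H` as a minor (branch-set model). -/
def HasMinor {V W : Type*} (G : SimpleGraph V) (H : SimpleGraph W) : Prop :=
  ∃ B : W → Set V, (∀ w, (G.induce (B w)).Connected) ∧
    (∀ w w', w ≠ w' → Disjoint (B w) (B w')) ∧
    ∀ ⦃w w'⦄, H.Adj w w' → ∃ a ∈ B w, ∃ b ∈ B w', G.Adj a b

/-- Planarity via Wagner's theorem: no `K₅` minor and no `K₃,₃` minor. -/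
def PlanarWagner {V : Type*} (G : SimpleGraph V) : Prop :=
  ¬ HasMinor G (completeGraph (Fin 5)) ∧
    ¬ HasMinor G (completeBipartiteGraph (Fin 3) (Fin 3))

/-- A subdivision of the `k`-wheel in `G` with hub `v`. -/
structure WheelSubdivision {V : Type*} (G : SimpleGraph V) (v : V) (k : ℕ) where
  b : Fin k → V
  binj : Function.Injective b
  bne : ∀ i, b i ≠ v
  spoke : ∀ i : Fin k, G.Walk v (b i)
  spokePath : ∀ i, (spoke i).IsPath
  seg : ∀ i : Fin k, G.Walk (b i) (b (finRotate k i))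
  segPath : ∀ i, (seg i).IsPath
  vNotinSeg : ∀ i, v ∉ (seg i).support
  spokeDisj : ∀ i j, i ≠ j →
    {x | x ∈ (spoke i).support} ∩ {x | x ∈ (spoke j).support} = {v}
  spokeSegDisj : ∀ i j,
    {x | x ∈ (spoke i).support} ∩ {x | x ∈ (seg j).support} ⊆
      ({b i} : Set V) ∩ {b j, b (finRotate k j)}
  segDisj : ∀ i j, i ≠ j →
    {x | x ∈ (seg i).support} ∩ {x | x ∈ (seg j).support} ⊆
      ({b i, b (finRotate k i)} : Set V) ∩ {b j, b (finRotate k j)}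

/-- A subdivision of the `k`-dipole with poles `u`, `v`: `k` internally vertex-disjoint
`u`–`v` paths of length at least `2`. -/
structure DipoleSubdivision {V : Type*} (G : SimpleGraph V) (u v : V) (k : ℕ) where
  path : Fin k → G.Walk u v
  isPath : ∀ i, (path i).IsPath
  len : ∀ i, 2 ≤ (path i).length
  disj : ∀ i j, i ≠ j →
    {x | x ∈ (path i).support} ∩ {x | x ∈ (path j).support} = ({u, v} : Set V)

/-- A separation of `G`. -/
def IsSeparation {V : Type*} (G : SimpleGraph V) (A B : Set V) : Prop :=
  A ∪ B = Set.univ ∧ ∀ a ∈ A \ B, ∀ b ∈ B \ A, ¬ G.Adj a b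

/-- `μ(X,Y)`: the minimum order of a separation `(A,B)` with `X ⊆ A` and `Y ⊆ B`. -/
noncomputable def muSep {V : Type*} (G : SimpleGraph V) (X Y : Set V) : ℕ :=
  sInf {n | ∃ A B : Set V, IsSeparation G A B ∧ X ⊆ A ∧ Y ⊆ B ∧ (A ∩ B).ncard = n}

def IsMaximalClique {V : Type*} (G : SimpleGraph V) (K : Set V) : Prop :=
  G.IsClique K ∧ ∀ K' : Set V, G.IsClique K' → K ⊆ K' → K' = K

/-- `G` is proper chordal: it has a tree-layout in which every maximal clique is an
interval of a root-to-leaf path. -/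
def ProperChordal {V : Type*} (G : SimpleGraph V) : Prop :=
  ∃ L : TreeLayout G, ∀ K : Set V, IsMaximalClique G K →
    ∃ a b : V, L.Anc a b ∧ K = L.interval a b

/-- A topological-minor model (subdivision embedding) of `H` in `G`. -/
structure TopMinorEmbedding {W V : Type*} (H : SimpleGraph W) (G : SimpleGraph V) where
  φ : W → V
  inj : Function.Injective φ
  path : ∀ ⦃a b : W⦄, H.Adj a b → G.Walk (φ a) (φ b)
  isPath : ∀ ⦃a b : W⦄ (h : H.Adj a b), (path h).IsPath
  branchOnPath : ∀ ⦃a b : W⦄ (h : H.Adj a b) (w : W),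
    φ w ∈ (path h).support → w = a ∨ w = b
  disj : ∀ ⦃a b c d : W⦄ (hab : H.Adj a b) (hcd : H.Adj c d), s(a, b) ≠ s(c, d) →
    {x | x ∈ (path hab).support} ∩ {x | x ∈ (path hcd).support} ⊆
      ({φ a, φ b} : Set V) ∩ {φ c, φ d}

/-- A subdivision of the star `K_{1,s}` in `H` with all leaves in `X`. -/
structure StarSubdivision {V : Type*} (H : SimpleGraph V) (X : Set V) (s : ℕ) where
  center : V
  leaf : Fin s → V
  leafInj : Function.Injective leaf
  leafX : ∀ i, leaf i ∈ X
  leafNe : ∀ i, leaf i ≠ center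
  path : ∀ i : Fin s, H.Walk center (leaf i)
  isPath : ∀ i, (path i).IsPath
  disj : ∀ i j, i ≠ j →
    {x | x ∈ (path i).support} ∩ {x | x ∈ (path j).support} = {center}

/-- The weight `w(t,U)` of a set `U` at a node `t` of a tree decomposition is at most `a`:
`|β(t) ∩ U|` plus the number of a suitable family of adhesions incident to `t` whose union
hits all paths from `β(t)` to `U ∖ β(t)` is at most `a`. -/
def WeightLE {V : Type*} {G : SimpleGraph V} (D : TreeDecomp G) (U : Set V) (t : D.ι)
    (a : ℕ) : Prop :=
  ∃ F : Set D.ι, (∀ s ∈ F, D.tree.Adj t s) ∧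
    (D.bag t ∩ U).ncard + F.ncard ≤ a ∧
    ∀ ⦃x y : V⦄ (p : G.Walk x y), x ∈ D.bag t → y ∈ U \ D.bag t →
      ∃ z ∈ p.support, ∃ s ∈ F, z ∈ D.bag t ∩ D.bag s

/-- The graph obtained from `G` by subdividing the edge `xy` into a path with `n + 1`
new internal vertices. -/
def subdivideEdge {V : Type*} (G : SimpleGraph V) (x y : V) (n : ℕ) :
    SimpleGraph (V ⊕ Fin (n + 1)) :=
  SimpleGraph.fromRel (fun a b =>
    (∃ u w : V, a = Sum.inl u ∧ b = Sum.inl w ∧ G.Adj u w ∧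
      ¬(u = x ∧ w = y) ∧ ¬(u = y ∧ w = x)) ∨
    (a = Sum.inl x ∧ b = Sum.inr 0) ∨
    (∃ i : Fin n, a = Sum.inr i.castSucc ∧ b = Sum.inr i.succ) ∨
    (a = Sum.inr (Fin.last n) ∧ b = Sum.inl y))

/-! ### Auxiliary machinery for Statement 8 -/

namespace EtwAux

open SimpleGraph Walk

section TreeMetric

variable {V : Type*} {T : SimpleGraph V} {r x y z a b : V}

lemma ancIn_refl (T : SimpleGraph V) (r x : V) : AncIn T r x x := by
  simp [AncIn, SimpleGraph.dist_self]

lemma ancIn_root (T : SimpleGraph V) (r x : V) : AncIn T r r x := by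
  simp [AncIn, SimpleGraph.dist_self]

lemma ancIn_antisymm (hT : T.IsTree) (h1 : AncIn T r x y) (h2 : AncIn T r y x) : x = y := by
  unfold AncIn at h1 h2
  have hc : T.dist y x = T.dist x y := SimpleGraph.dist_comm ..
  have h0 : T.dist x y = 0 := by omega
  exact ((hT.isConnected.preconnected x y).dist_eq_zero_iff).mp h0

lemma ancIn_trans (hT : T.IsTree) (h1 : AncIn T r x y) (h2 : AncIn T r y z) :
    AncIn T r x z := by
  have t1 : T.dist x z ≤ T.dist x y + T.dist y z := hT.isConnected.dist_triangle
  have t2 : T.dist r z ≤ T.dist r x + T.dist x z := hT.isConnected.dist_triangle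
  unfold AncIn at *
  omega

lemma path_length_eq_dist (hT : T.IsTree) {p : T.Walk x y} (hp : p.IsPath) :
    p.length = T.dist x y := by
  obtain ⟨q, hq, hlen⟩ := (hT.isConnected.preconnected x y).exists_path_of_dist
  have := hT.IsAcyclic.path_unique ⟨p, hp⟩ ⟨q, hq⟩
  rw [Subtype.mk.injEq] at this
  rw [this, hlen]

lemma ancIn_iff_mem_support (hT : T.IsTree) {p : T.Walk r y} (hp : p.IsPath) :
    AncIn T r x y ↔ x ∈ p.support := by
  classical
  constructor
  · intro hx
    obtain ⟨p1, hp1, hl1⟩ := (hT.isConnected.preconnected r x).exists_path_of_dist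
    obtain ⟨p2, hp2, hl2⟩ := (hT.isConnected.preconnected x y).exists_path_of_dist
    have hw : (p1.append p2).length = T.dist r y := by
      rw [Walk.length_append]; unfold AncIn at hx; omega
    have hwp : (p1.append p2).IsPath := Walk.isPath_of_length_eq_dist _ hw
    have heq := hT.IsAcyclic.path_unique ⟨p1.append p2, hwp⟩ ⟨p, hp⟩
    rw [Subtype.mk.injEq] at heq
    rw [← heq, Walk.mem_support_append_iff]
    exact Or.inl p1.end_mem_support
  · intro hx
    have h1 : (p.takeUntil x hx).length = T.dist r x :=
      path_length_eq_dist hT (hp.takeUntil hx)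
    have h2 : (p.dropUntil x hx).length = T.dist x y :=
      path_length_eq_dist hT (hp.dropUntil hx)
    have hlen : (p.takeUntil x hx).length + (p.dropUntil x hx).length = p.length := by
      rw [← Walk.length_append, p.take_spec hx]
    have hp' : p.length = T.dist r y := path_length_eq_dist hT hp
    unfold AncIn
    omega

lemma ancIn_of_mem_dropUntil (hT : T.IsTree) {q : T.Walk a y} (hq : q.IsPath)
    (hay : AncIn T r a y) (hb : b ∈ q.support) : AncIn T r a b := by
  classical
  have e1 : (q.takeUntil b hb).length = T.dist a b :=
    path_length_eq_dist hT (hq.takeUntil hb)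
  have e2 : (q.dropUntil b hb).length = T.dist b y :=
    path_length_eq_dist hT (hq.dropUntil hb)
  have hlen : (q.takeUntil b hb).length + (q.dropUntil b hb).length = q.length := by
    rw [← Walk.length_append, q.take_spec hb]
  have hq' : q.length = T.dist a y := path_length_eq_dist hT hq
  have t1 : T.dist r b ≤ T.dist r a + T.dist a b := hT.isConnected.dist_triangle
  have t2 : T.dist r y ≤ T.dist r b + T.dist b y := hT.isConnected.dist_triangle
  unfold AncIn at *
  omega

lemma ancIn_chain (hT : T.IsTree) (ha : AncIn T r a y) (hb : AncIn T r b y) :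
    AncIn T r a b ∨ AncIn T r b a := by
  classical
  obtain ⟨p, hp, _⟩ := (hT.isConnected.preconnected r y).exists_path_of_dist
  have ha' := (ancIn_iff_mem_support hT hp).mp ha
  have hb' := (ancIn_iff_mem_support hT hp).mp hb
  rw [← p.take_spec ha', Walk.mem_support_append_iff] at hb'
  rcases hb' with h | h
  · exact Or.inr ((ancIn_iff_mem_support hT (hp.takeUntil ha')).mpr h)
  · exact Or.inl (ancIn_of_mem_dropUntil hT (hp.dropUntil ha') ha h)

end TreeMetric

section RootedOrder

/-- A rooted "ancestor order" on a finite vertex set, which we convert into a tree. -/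
structure RootedOrder (V : Type*) where
  le : V → V → Prop
  refl : ∀ x, le x x
  antisymm : ∀ {x y}, le x y → le y x → x = y
  trans : ∀ {x y z}, le x y → le y z → le x z
  chain : ∀ {a b x}, le a x → le b x → le a b ∨ le b a
  root : V
  root_le : ∀ x, le root x

namespace RootedOrder

variable {V : Type*} [Fintype V] (R : RootedOrder V)

/-- Strict ancestors of `x`. -/
def sanc (x : V) : Set V := {a | R.le a x ∧ a ≠ x}

/-- Depth of a vertex. -/
noncomputable def ht (x : V) : ℕ := (R.sanc x).ncard

lemma sanc_subset {x y : V} (hxy : R.le x y) : R.sanc x ⊆ R.sanc y := by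
  rintro a ⟨hax, hne⟩
  refine ⟨R.trans hax hxy, fun h => hne ?_⟩
  subst h
  exact R.antisymm hax hxy

lemma sanc_ssubset {x y : V} (hxy : R.le x y) (hne : x ≠ y) : R.sanc x ⊂ R.sanc y := by
  refine ⟨R.sanc_subset hxy, fun hsub => ?_⟩
  have : x ∈ R.sanc x := hsub ⟨hxy, hne⟩
  exact this.2 rfl

lemma ht_lt {x y : V} (hxy : R.le x y) (hne : x ≠ y) : R.ht x < R.ht y :=
  Set.ncard_lt_ncard (R.sanc_ssubset hxy hne) (Set.toFinite _)

lemma ht_le {x y : V} (hxy : R.le x y) : R.ht x ≤ R.ht y := by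
  by_cases h : x = y
  · subst h; rfl
  · exact (R.ht_lt hxy h).le

lemma eq_of_le_of_ht_le {x y : V} (hxy : R.le x y) (h : R.ht y ≤ R.ht x) : x = y := by
  by_contra hne
  exact absurd h (R.ht_lt hxy hne).not_ge

lemma sanc_root : R.sanc R.root = ∅ := by
  ext a
  simp only [sanc, Set.mem_setOf_eq, Set.mem_empty_iff_false, iff_false, not_and]
  intro h hne
  exact hne (R.antisymm h (R.root_le a))

lemma ht_root : R.ht R.root = 0 := by
  unfold ht
  rw [R.sanc_root, Set.ncard_empty]

lemma eq_root_of_ht_eq_zero {x : V} (h : R.ht x = 0) : x = R.root := by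
  by_contra hne
  have : R.root ∈ R.sanc x := ⟨R.root_le x, fun hc => hne hc.symm⟩
  have hpos : 0 < R.ht x := (Set.ncard_pos (Set.toFinite _)).mpr ⟨_, this⟩
  omega

/-- Every non-root vertex has a parent: a maximum strict ancestor. -/
lemma exists_parent {x : V} (hx : x ≠ R.root) :
    ∃ p, p ∈ R.sanc x ∧ (∀ a ∈ R.sanc x, R.le a p) ∧ R.ht p + 1 = R.ht x := by
  have hne : (R.sanc x).Nonempty := ⟨R.root, R.root_le x, fun hc => hx hc.symm⟩
  obtain ⟨p, hp, hmax⟩ := Set.exists_max_image (R.sanc x) R.ht (Set.toFinite _) hne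
  have hle : ∀ a ∈ R.sanc x, R.le a p := by
    intro a ha
    rcases R.chain ha.1 hp.1 with h | h
    · exact h
    · have hpa : p = a := R.eq_of_le_of_ht_le h (hmax a ha)
      rw [← hpa]
      exact R.refl p
  refine ⟨p, hp, hle, ?_⟩
  have hset : R.sanc x = insert p (R.sanc p) := by
    ext a
    constructor
    · intro ha
      by_cases h : a = p
      · exact h ▸ Set.mem_insert _ _
      · exact Set.mem_insert_of_mem _ ⟨hle a ha, h⟩
    · rintro (rfl | ⟨hap, hne'⟩)
      · exact hp
      · exact ⟨R.trans hap hp.1, fun hc => hne' (R.antisymm hap (hc ▸ hp.1))⟩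
  have hpp : p ∉ R.sanc p := fun hc => hc.2 rfl
  unfold ht
  rw [hset, Set.ncard_insert_of_notMem hpp (Set.toFinite _)]

/-- The cover graph of a rooted order. -/
def treeOf : SimpleGraph V where
  Adj x y := x ≠ y ∧ ((R.le x y ∧ R.ht x + 1 = R.ht y) ∨ (R.le y x ∧ R.ht y + 1 = R.ht x))
  symm := ⟨by
    rintro x y ⟨hne, h | h⟩
    · exact ⟨hne.symm, Or.inr h⟩
    · exact ⟨hne.symm, Or.inl h⟩⟩
  loopless := ⟨fun x h => h.1 rfl⟩

lemma treeOf_adj_parent {x p : V} (hp : p ∈ R.sanc x) (hht : R.ht p + 1 = R.ht x) :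
    R.treeOf.Adj p x :=
  ⟨hp.2, Or.inl ⟨hp.1, hht⟩⟩

lemma walk_bound {x y : V} (w : R.treeOf.Walk x y) :
    R.ht y ≤ R.ht x + w.length ∧ R.ht x ≤ R.ht y + w.length := by
  induction w with
  | nil => simp
  | cons h w ih =>
    rcases h.2 with h' | h' <;> · simp only [Walk.length_cons]; omega

/-- Walk to the root of length `ht x`. -/
lemma exists_walk_to_root (x : V) :
    ∃ w : R.treeOf.Walk x R.root, w.length = R.ht x := by
  generalize hn : R.ht x = n
  induction n using Nat.strong_induction_on generalizing x with
  | _ n ih =>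
    by_cases hx : x = R.root
    · subst hx
      exact ⟨Walk.nil, by rw [← hn, R.ht_root]; rfl⟩
    · obtain ⟨p, hp, _, hht⟩ := R.exists_parent hx
      obtain ⟨w, hw⟩ := ih (R.ht p) (by omega) p rfl
      exact ⟨Walk.cons (R.treeOf_adj_parent hp hht).symm w, by simp [hw]; omega⟩

lemma treeOf_connected [Nonempty V] : R.treeOf.Connected := by
  rw [SimpleGraph.connected_iff]
  refine ⟨fun x y => ?_, inferInstance⟩
  obtain ⟨wx, _⟩ := R.exists_walk_to_root x
  obtain ⟨wy, _⟩ := R.exists_walk_to_root y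
  exact ⟨wx.append wy.reverse⟩

lemma dist_root (x : V) : R.treeOf.dist R.root x = R.ht x := by
  obtain ⟨w, hw⟩ := R.exists_walk_to_root x
  have h1 : R.treeOf.dist R.root x ≤ R.ht x := by
    have := SimpleGraph.dist_le w.reverse
    rwa [Walk.length_reverse, hw] at this
  have h2 : R.ht x ≤ R.treeOf.dist R.root x := by
    have hr : R.treeOf.Reachable R.root x := ⟨w.reverse⟩
    obtain ⟨q, hq⟩ := hr.exists_walk_length_eq_dist
    have := R.walk_bound q
    rw [hq] at this
    have h0 := R.ht_root
    omega
  omega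

/-- Upward walk from `x` to a descendant `y`. -/
lemma exists_walk_desc {x y : V} (hxy : R.le x y) :
    ∃ w : R.treeOf.Walk x y, w.length + R.ht x = R.ht y := by
  generalize hn : R.ht y = n
  induction n using Nat.strong_induction_on generalizing y with
  | _ n ih =>
    by_cases he : x = y
    · subst he; exact ⟨Walk.nil, by simpa using hn⟩
    · have hy : y ≠ R.root := by
        intro h
        subst h
        exact he (R.antisymm hxy (R.root_le x))
      obtain ⟨p, hp, hmax, hht⟩ := R.exists_parent hy
      have hxp : R.le x p := hmax x ⟨hxy, he⟩
      obtain ⟨w, hw⟩ := ih (R.ht p) (by omega) hxp rfl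
      refine ⟨w.concat (R.treeOf_adj_parent hp hht), ?_⟩
      rw [Walk.length_concat]
      omega

lemma dist_le_desc {x y : V} (hxy : R.le x y) :
    R.ht x + R.treeOf.dist x y = R.ht y := by
  obtain ⟨w, hw⟩ := R.exists_walk_desc hxy
  have h1 : R.treeOf.dist x y ≤ w.length := SimpleGraph.dist_le w
  obtain ⟨q, hq⟩ := (Walk.reachable w).exists_walk_length_eq_dist
  have h2 := R.walk_bound q
  rw [hq] at h2
  omega

lemma descend_of_walk {x y : V} (w : R.treeOf.Walk x y) (h : R.ht x + w.length = R.ht y) :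
    R.le x y := by
  induction w with
  | nil => exact R.refl _
  | @cons a u c hadj w ih =>
    simp only [Walk.length_cons] at h
    have hb := R.walk_bound w
    rcases hadj.2 with h' | h'
    · exact R.trans h'.1 (ih (by omega))
    · omega

/-- The key equivalence: metric ancestry in `treeOf` is the original order. -/
lemma ancIn_treeOf_iff [Nonempty V] {x y : V} :
    AncIn R.treeOf R.root x y ↔ R.le x y := by
  unfold AncIn
  rw [R.dist_root, R.dist_root]
  constructor
  · intro h
    have hr : R.treeOf.Reachable x y := R.treeOf_connected.preconnected x y
    obtain ⟨q, hq⟩ := hr.exists_walk_length_eq_dist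
    exact R.descend_of_walk q (by omega)
  · intro h
    have := R.dist_le_desc h
    omega

lemma parent_unique {x p q : V} (hp : p ∈ R.sanc x) (hhp : R.ht p + 1 = R.ht x)
    (hq : q ∈ R.sanc x) (hhq : R.ht q + 1 = R.ht x) : p = q := by
  rcases R.chain hp.1 hq.1 with h | h
  · exact R.eq_of_le_of_ht_le h (by omega)
  · exact (R.eq_of_le_of_ht_le h (by omega)).symm

lemma treeOf_isBridge {x y : V} (hxy : R.le x y) (hne : x ≠ y) (hht : R.ht x + 1 = R.ht y) :
    R.treeOf.IsBridge s(x, y) := by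
  rw [SimpleGraph.isBridge_iff]
  have _hadj : R.treeOf.Adj x y := ⟨hne, Or.inl ⟨hxy, hht⟩⟩
  rintro ⟨w⟩
  -- potential function: `R.le y ·` is invariant along edges other than `{x,y}`
  have key : ∀ {a c : V}, (R.treeOf \ SimpleGraph.fromEdgeSet {s(x, y)}).Adj a c →
      (R.le y a ↔ R.le y c) := by
    intro a c hac
    rw [SimpleGraph.sdiff_adj, SimpleGraph.fromEdgeSet_adj] at hac
    obtain ⟨⟨hne', hor⟩, hnot⟩ := hac
    have hnotxy : s(a, c) ≠ s(x, y) := fun hc => hnot ⟨hc ▸ Set.mem_singleton _, hne'⟩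
    -- reduce to the parent-child case
    have main : ∀ {u v : V}, u ≠ v → R.le u v → R.ht u + 1 = R.ht v → s(u, v) ≠ s(x, y) →
        (R.le y u ↔ R.le y v) := by
      intro u v huv huvle hhtv hsne
      constructor
      · intro h; exact R.trans h huvle
      · intro h
        rcases R.chain h huvle with h' | h'
        · exact h'
        · -- le u y and le y v
          have h1 : R.ht u ≤ R.ht y := R.ht_le h'
          have h2 : R.ht y ≤ R.ht v := R.ht_le h
          by_cases hcase : R.ht y = R.ht u
          · have : u = y := R.eq_of_le_of_ht_le h' (by omega)
            subst this; exact R.refl _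
          · have hyv : y = v := R.eq_of_le_of_ht_le h (by omega)
            subst hyv
            -- u and x are both parents of y
            have : u = x := R.parent_unique ⟨huvle, huv⟩ hhtv ⟨hxy, hne⟩ hht
            subst this
            exact absurd rfl hsne
    rcases hor with h' | h'
    · exact main hne' h'.1 h'.2 hnotxy
    · exact (main hne'.symm h'.1 h'.2 (by rwa [Sym2.eq_swap])).symm
  have hinv : ∀ {a c : V} (w' : (R.treeOf \ SimpleGraph.fromEdgeSet {s(x, y)}).Walk a c),
      (R.le y a ↔ R.le y c) := by
    intro a c w'
    induction w' with
    | nil => rfl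
    | cons h _ ih => exact (key h).trans ih
  have := hinv w
  have hyx : ¬R.le y x := fun h => by
    have := R.ht_le h
    omega
  exact hyx (this.mpr (R.refl y))

lemma treeOf_isTree [Nonempty V] : R.treeOf.IsTree := by
  refine ⟨R.treeOf_connected, ?_⟩
  rw [SimpleGraph.isAcyclic_iff_forall_adj_isBridge]
  rintro v w ⟨hne, h | h⟩
  · exact R.treeOf_isBridge h.1 hne h.2
  · rw [Sym2.eq_swap]
    exact R.treeOf_isBridge h.1 hne.symm h.2

end RootedOrder

end RootedOrder

section LayoutLemmas

variable {V : Type*} {G : SimpleGraph V}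

lemma anc_refl (L : TreeLayout G) (x : V) : L.Anc x x := ancIn_refl _ _ _

lemma anc_trans (L : TreeLayout G) {x y z : V} (h1 : L.Anc x y) (h2 : L.Anc y z) :
    L.Anc x z := ancIn_trans L.isTree h1 h2

lemma anc_antisymm (L : TreeLayout G) {x y : V} (h1 : L.Anc x y) (h2 : L.Anc y x) : x = y :=
  ancIn_antisymm L.isTree h1 h2

lemma anc_chain (L : TreeLayout G) {a b y : V} (h1 : L.Anc a y) (h2 : L.Anc b y) :
    L.Anc a b ∨ L.Anc b a := ancIn_chain L.isTree h1 h2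

/-- `u` is an ancestor of `v` and there is a `G`-walk from `u` to `v` all within
the descendants of `u`. -/
def leC (L : TreeLayout G) (u v : V) : Prop :=
  ∃ w : G.Walk u v, ∀ z ∈ w.support, L.Anc u z

lemma leC.anc {L : TreeLayout G} {u v : V} (h : leC L u v) : L.Anc u v := by
  obtain ⟨w, hw⟩ := h
  exact hw v w.end_mem_support

lemma leC_refl (L : TreeLayout G) (u : V) : leC L u u :=
  ⟨Walk.nil, by simp [anc_refl]⟩

lemma leC_trans {L : TreeLayout G} {u v w : V} (h1 : leC L u v) (h2 : leC L v w) :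
    leC L u w := by
  obtain ⟨w1, hw1⟩ := h1
  obtain ⟨w2, hw2⟩ := h2
  have huv : L.Anc u v := hw1 v w1.end_mem_support
  refine ⟨w1.append w2, fun z hz => ?_⟩
  rw [Walk.mem_support_append_iff] at hz
  rcases hz with h | h
  · exact hw1 z h
  · exact anc_trans L huv (hw2 z h)

lemma leC_antisymm {L : TreeLayout G} {u v : V} (h1 : leC L u v) (h2 : leC L v u) : u = v :=
  anc_antisymm L h1.anc h2.anc

lemma leC_chain {L : TreeLayout G} {a b y : V} (h1 : leC L a y) (h2 : leC L b y) :
    leC L a b ∨ leC L b a := by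
  obtain ⟨w1, hw1⟩ := h1
  obtain ⟨w2, hw2⟩ := h2
  rcases anc_chain L (hw1 y w1.end_mem_support) (hw2 y w2.end_mem_support) with h | h
  · refine Or.inl ⟨w1.append w2.reverse, fun z hz => ?_⟩
    rw [Walk.mem_support_append_iff] at hz
    rcases hz with hz | hz
    · exact hw1 z hz
    · rw [Walk.support_reverse, List.mem_reverse] at hz
      exact anc_trans L h (hw2 z hz)
  · refine Or.inr ⟨w2.append w1.reverse, fun z hz => ?_⟩
    rw [Walk.mem_support_append_iff] at hz
    rcases hz with hz | hz
    · exact hw2 z hz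
    · rw [Walk.support_reverse, List.mem_reverse] at hz
      exact anc_trans L h (hw1 z hz)

lemma leC_of_adj {L : TreeLayout G} {x y : V} (hadj : G.Adj x y) (h : L.Anc x y) :
    leC L x y := by
  refine ⟨Walk.cons hadj Walk.nil, fun z hz => ?_⟩
  simp only [Walk.support_cons, Walk.support_nil, List.mem_cons, List.mem_singleton] at hz
  rcases hz with rfl | rfl | h'
  · exact anc_refl L z
  · exact h
  · exact absurd h' List.not_mem_nil

lemma leC_mem_support {L : TreeLayout G} {u v z : V} (w : G.Walk u v)
    (hw : ∀ t ∈ w.support, L.Anc u t) (hz : z ∈ w.support) : leC L u z := by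
  classical
  exact ⟨w.takeUntil z hz, fun t ht => hw t (Walk.support_takeUntil_subset _ _ ht)⟩

/-- A connected set has a topmost element which is an ancestor of all of it. -/
lemma exists_top [Fintype V] (L : TreeLayout G) {S : Set V} (hS : S.Nonempty)
    (hconn : ∀ x ∈ S, ∀ y ∈ S, ∃ w : G.Walk x y, ∀ z ∈ w.support, z ∈ S) :
    ∃ m ∈ S, ∀ x ∈ S, L.Anc m x := by
  obtain ⟨m, hm, hmin⟩ :=
    Set.exists_min_image S (fun v => L.tree.dist L.root v) (Set.toFinite _) hS
  refine ⟨m, hm, fun x hx => ?_⟩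
  obtain ⟨w, hw⟩ := hconn m hm x hx
  have aux : ∀ {u x' : V} (w : G.Walk u x'), (∀ z ∈ w.support, z ∈ S) → L.Anc m u →
      L.Anc m x' := by
    intro u x' w
    induction w with
    | nil => exact fun _ h => h
    | @cons u c x' hadj w' ih =>
      intro hsupp hmu
      have hcS : c ∈ S := hsupp c (by simp [Walk.support_cons])
      have hnext : L.Anc m c := by
        rcases L.layout hadj with h | h
        · exact anc_trans L hmu h
        · rcases anc_chain L hmu h with h' | h'
          · exact h'
          · -- c is an ancestor of m of smaller or equal depth: c = m
            have h1 : L.tree.dist L.root c + L.tree.dist c m = L.tree.dist L.root m := h'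
            have h2 := hmin c hcS
            have h0 : L.tree.dist c m = 0 := by omega
            have : c = m := (L.isTree.isConnected.preconnected c m).dist_eq_zero_iff.mp h0
            rw [this]
            exact anc_refl L m
      exact ih (fun z hz => hsupp z (by simp [Walk.support_cons, hz])) hnext
  exact aux w hw (anc_refl L m)

/-- Normalization: every layout can be replaced by one whose descendant sets are connected,
without increasing the treewidth measure. -/
lemma exists_good_layout [Fintype V] [Nonempty V] (G : SimpleGraph V) (L : TreeLayout G) :
    ∃ L' : TreeLayout G, ∀ a u d : V, L'.StrictAnc a u → L'.Anc u d → G.Adj a d →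
      L.StrictAnc a u ∧ leC L u d := by
  classical
  haveI : Fintype G.ConnectedComponent := Fintype.ofFinite _
  -- the topmost element of each component
  have htop : ∀ c : G.ConnectedComponent,
      ∃ m, G.connectedComponentMk m = c ∧
        ∀ x, G.connectedComponentMk x = c → leC L m x := by
    intro c
    obtain ⟨v, rfl⟩ := c.exists_rep
    set S : Set V := {x | G.connectedComponentMk x = G.connectedComponentMk v} with hSdef
    have hwalkS : ∀ x ∈ S, ∀ y ∈ S, ∃ w : G.Walk x y, ∀ z ∈ w.support, z ∈ S := by
      intro x hx y hy
      have hx' : G.connectedComponentMk x = G.connectedComponentMk v := hx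
      have hy' : G.connectedComponentMk y = G.connectedComponentMk v := hy
      have hr : G.Reachable x y := SimpleGraph.ConnectedComponent.exact (hx'.trans hy'.symm)
      obtain ⟨w⟩ := hr
      refine ⟨w, fun z hz => ?_⟩
      have hxz : G.Reachable x z := ⟨w.takeUntil z hz⟩
      show G.connectedComponentMk z = G.connectedComponentMk v
      rw [← SimpleGraph.ConnectedComponent.sound hxz]
      exact hx'
    have hvS : v ∈ S := by rw [hSdef]; exact Set.mem_setOf_eq ▸ rfl
    obtain ⟨m, hm, hanc⟩ := exists_top L (S := S) ⟨v, hvS⟩ hwalkS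
    refine ⟨m, hm, fun x hx => ?_⟩
    obtain ⟨w, hw⟩ := hwalkS m hm x hx
    exact ⟨w, fun z hz => hanc z (hw z hz)⟩
  choose top htop1 htop2 using htop
  set e := Fintype.equivFin G.ConnectedComponent with he
  set rank : G.ConnectedComponent → ℕ := fun c => (e c : ℕ) with hrank
  have rank_inj : ∀ {c c'}, rank c = rank c' → c = c' := by
    intro c c' h
    exact e.injective (Fin.ext h)
  have hcard : 0 < Fintype.card G.ConnectedComponent :=
    Fintype.card_pos_iff.mpr ⟨G.connectedComponentMk (Classical.arbitrary V)⟩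
  set c0 : G.ConnectedComponent := e.symm ⟨0, hcard⟩ with hc0
  set le' : V → V → Prop := fun x y =>
    ((G.connectedComponentMk x) = (G.connectedComponentMk y) ∧ leC L x y) ∨ (rank ((G.connectedComponentMk x)) < rank ((G.connectedComponentMk y)) ∧ x = top ((G.connectedComponentMk x))) with hle'
  have hrank0 : rank c0 = 0 := by simp [hrank, hc0]
  have top_eq : ∀ {x : V} {c}, (G.connectedComponentMk x) = c → leC L (top c) x := fun {x c} h => htop2 c x h
  -- antisymmetric-from-top helper
  have top_self : ∀ {x : V}, leC L x (top ((G.connectedComponentMk x))) → x = top ((G.connectedComponentMk x)) := by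
    intro x h
    exact leC_antisymm h (top_eq rfl)
  have hrefl : ∀ x, le' x x := fun x => Or.inl ⟨rfl, leC_refl L x⟩
  have hantisymm : ∀ {x y}, le' x y → le' y x → x = y := by
    rintro x y (⟨h1, h2⟩ | ⟨h1, h2⟩) (⟨h1', h2'⟩ | ⟨h1', h2'⟩)
    · exact leC_antisymm h2 h2'
    · rw [h1] at h1'; omega
    · rw [h1'] at h1; omega
    · omega
  have htrans : ∀ {x y z}, le' x y → le' y z → le' x z := by
    rintro x y z (⟨h1, h2⟩ | ⟨h1, h2⟩) (⟨h1', h2'⟩ | ⟨h1', h2'⟩)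
    · exact Or.inl ⟨h1.trans h1', leC_trans h2 h2'⟩
    · refine Or.inr ⟨by rw [h1]; exact h1', ?_⟩
      have : x = top ((G.connectedComponentMk y)) := h1 ▸ top_self (h1 ▸ (h2' ▸ h2))
      rw [h1]; exact this
    · exact Or.inr ⟨by rw [← h1']; exact h1, h2⟩
    · exact Or.inr ⟨h1.trans h1', h2⟩
  have hchain : ∀ {a b x}, le' a x → le' b x → le' a b ∨ le' b a := by
    rintro a b x (⟨h1, h2⟩ | ⟨h1, h2⟩) (⟨h1', h2'⟩ | ⟨h1', h2'⟩)
    · rcases leC_chain h2 h2' with h | h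
      · exact Or.inl (Or.inl ⟨h1.trans h1'.symm, h⟩)
      · exact Or.inr (Or.inl ⟨h1'.trans h1.symm, h⟩)
    · exact Or.inr (Or.inr ⟨by rw [h1]; exact h1', h2'⟩)
    · exact Or.inl (Or.inr ⟨by rw [h1']; exact h1, h2⟩)
    · rcases Nat.lt_trichotomy (rank ((G.connectedComponentMk a))) (rank ((G.connectedComponentMk b))) with h | h | h
      · exact Or.inl (Or.inr ⟨h, h2⟩)
      · have : (G.connectedComponentMk a) = (G.connectedComponentMk b) := rank_inj h
        refine Or.inl (Or.inl ⟨this, ?_⟩)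
        rw [h2, this, ← h2']
        exact leC_refl L b
      · exact Or.inr (Or.inr ⟨h, h2'⟩)
  set r : V := top c0 with hr
  have hroot : ∀ x, le' r x := by
    intro x
    by_cases h : (G.connectedComponentMk x) = c0
    · exact Or.inl ⟨by rw [htop1 c0, h], htop2 c0 x h⟩
    · refine Or.inr ⟨?_, by rw [htop1 c0]⟩
      rw [htop1 c0, hrank0]
      rcases Nat.eq_zero_or_pos (rank ((G.connectedComponentMk x))) with h0 | h0
      · exfalso
        apply h
        apply rank_inj
        rw [h0, hrank0]
      · exact h0
  set R : RootedOrder V :=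
    { le := le', refl := hrefl, antisymm := hantisymm, trans := htrans,
      chain := hchain, root := r, root_le := hroot } with hR
  have hiff : ∀ x y : V, AncIn R.treeOf R.root x y ↔ le' x y := fun x y =>
    R.ancIn_treeOf_iff
  have hlayout : ∀ ⦃x y : V⦄, G.Adj x y →
      AncIn R.treeOf R.root x y ∨ AncIn R.treeOf R.root y x := by
    intro x y hadj
    have hcomp : (G.connectedComponentMk x) = (G.connectedComponentMk y) := SimpleGraph.ConnectedComponent.sound hadj.reachable
    rcases L.layout hadj with h | h
    · exact Or.inl ((hiff x y).mpr (Or.inl ⟨hcomp, leC_of_adj hadj h⟩))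
    · exact Or.inr ((hiff y x).mpr (Or.inl ⟨hcomp.symm, leC_of_adj hadj.symm h⟩))
  refine ⟨⟨R.treeOf, R.treeOf_isTree, R.root, hlayout⟩, ?_⟩
  rintro a u d ⟨hau, hne⟩ hud hadj
  have hau' : le' a u := (hiff a u).mp hau
  have hud' : le' u d := (hiff u d).mp hud
  have hcomp : (G.connectedComponentMk a) = (G.connectedComponentMk d) := SimpleGraph.ConnectedComponent.sound hadj.reachable
  -- resolve the cases
  have hud'' : (G.connectedComponentMk u) = (G.connectedComponentMk d) ∧ leC L u d := by
    rcases hud' with h | h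
    · exact h
    · exfalso
      rcases hau' with h' | h'
      · rw [← h'.1, hcomp] at h
        omega
      · rw [hcomp] at h'
        omega
  have hau'' : (G.connectedComponentMk a) = (G.connectedComponentMk u) ∧ leC L a u := by
    rcases hau' with h | h
    · exact h
    · exfalso
      rw [hcomp, ← hud''.1] at h
      omega
  exact ⟨⟨hau''.2.anc, hne⟩, hud''.2⟩

end LayoutLemmas

section Blocks

variable {V : Type*} {G : SimpleGraph V}

lemma reachable_induce_of_walk {T : Set V} :
    ∀ {u v : V} (w : G.Walk u v) (_ : ∀ z ∈ w.support, z ∈ T) (hu : u ∈ T) (hv : v ∈ T),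
      (G.induce T).Reachable ⟨u, hu⟩ ⟨v, hv⟩ := by
  intro u v w
  induction w with
  | nil => exact fun _ _ _ => Reachable.refl _
  | @cons u b v hadj w' ih =>
    intro hw hu hv
    have hb : b ∈ T := hw b (by simp [Walk.support_cons])
    have hstep : (G.induce T).Adj ⟨u, hu⟩ ⟨b, hb⟩ := hadj
    exact hstep.reachable.trans
      (ih (fun z hz => hw z (by rw [Walk.support_cons]; exact List.mem_cons_of_mem _ hz)) hb hv)

lemma reachable_induce_mono {T T' : Set V} (hTT : T ⊆ T') {u v : V} {hu : u ∈ T} {hv : v ∈ T}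
    (h : (G.induce T).Reachable ⟨u, hu⟩ ⟨v, hv⟩) :
    (G.induce T').Reachable ⟨u, hTT hu⟩ ⟨v, hTT hv⟩ :=
  h.map (⟨fun z => ⟨z.1, hTT z.2⟩, fun {p q} h => h⟩ : G.induce T →g G.induce T')

lemma first_entry {S : Set V} :
    ∀ {u v : V} (q : G.Walk u v), q.IsPath → v ∈ S →
      ∃ w, w ∈ S ∧ ∃ q' : G.Walk u w, q'.IsPath ∧ (∀ z ∈ q'.support, z ∈ q.support) ∧
        (∀ z ∈ q'.support, z ≠ w → z ∉ S) := by
  classical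
  intro u v q
  induction q with
  | nil =>
    intro _ hv
    refine ⟨_, hv, Walk.nil, Walk.IsPath.nil, fun z hz => hz, ?_⟩
    intro z hz hzw
    simp only [Walk.support_nil, List.mem_singleton] at hz
    exact absurd hz hzw
  | @cons u b v hadj q' ih =>
    intro hp hv
    by_cases huS : u ∈ S
    · refine ⟨u, huS, Walk.nil, Walk.IsPath.nil, fun z hz => by
        simp only [Walk.support_nil, List.mem_singleton] at hz
        rw [Walk.support_cons]
        exact hz ▸ List.mem_cons_self, ?_⟩
      intro z hz hzw
      simp only [Walk.support_nil, List.mem_singleton] at hz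
      exact absurd hz hzw
    · obtain ⟨w, hwS, q'', hq''p, hsub, hout⟩ := ih hp.of_cons hv
      have huq' : u ∉ q'.support := ((Walk.cons_isPath_iff _ _).mp hp).2
      refine ⟨w, hwS, Walk.cons hadj q'', ?_, ?_, ?_⟩
      · rw [Walk.cons_isPath_iff]
        exact ⟨hq''p, fun hc => huq' (hsub u hc)⟩
      · intro z hz
        rw [Walk.support_cons, List.mem_cons] at hz
        rw [Walk.support_cons]
        rcases hz with rfl | hz
        · exact List.mem_cons_self
        · exact List.mem_cons_of_mem _ (hsub z hz)
      · intro z hz hzw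
        rw [Walk.support_cons, List.mem_cons] at hz
        rcases hz with rfl | hz
        · exact huS
        · exact hout z hz hzw

lemma path_take_drop_inter [DecidableEq V] {u v z y : V} {p : G.Walk u v} (hp : p.IsPath) (hz : z ∈ p.support)
    (h1 : y ∈ (p.takeUntil z hz).support) (h2 : y ∈ (p.dropUntil z hz).support) : y = z := by
  classical
  have hnd := hp.support_nodup
  conv at hnd => rw [← p.take_spec hz]
  rw [Walk.support_append, List.nodup_append] at hnd
  obtain ⟨hnd1, hnd2, hdisj⟩ := hnd
  have hcons := Walk.support_eq_cons (p.dropUntil z hz)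
  rw [hcons, List.mem_cons] at h2
  rcases h2 with rfl | h2
  · rfl
  · exact absurd rfl (hdisj y h1 y h2)

/-- Connected and no cutvertex: the defining properties shared by blocks. -/
def GoodSet (G : SimpleGraph V) (S : Set V) : Prop :=
  (G.induce S).Connected ∧ ∀ x ∈ S, (G.induce (S \ {x})).Preconnected

/-- Adding an ear to a good set keeps it good. -/
lemma goodSet_ear {S : Set V} (hS : GoodSet G S) {a w : V} (haS : a ∈ S) (hwS : w ∈ S)
    (hne : a ≠ w) (p : G.Walk a w) (hp : p.IsPath)
    (hint : ∀ z ∈ p.support, z ≠ a → z ≠ w → z ∉ S) :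
    GoodSet G (S ∪ {z | z ∈ p.support}) := by
  classical
  set S' := S ∪ {z | z ∈ p.support} with hS'
  have hsub : S ⊆ S' := Set.subset_union_left
  have hsubp : ∀ z ∈ p.support, z ∈ S' := fun z hz => Or.inr hz
  constructor
  · -- connectivity of S'
    rw [SimpleGraph.connected_iff]
    refine ⟨?_, ⟨⟨a, hsub haS⟩⟩⟩
    have reach_a : ∀ (y : V) (hy : y ∈ S'),
        (G.induce S').Reachable ⟨y, hy⟩ ⟨a, hsub haS⟩ := by
      intro y hy
      rcases hy with hyS | hyp
      · exact reachable_induce_mono hsub (hS.1.preconnected ⟨y, hyS⟩ ⟨a, haS⟩)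
      · exact reachable_induce_of_walk (p.takeUntil y hyp).reverse
          (fun z hz => by
            rw [Walk.support_reverse, List.mem_reverse] at hz
            exact hsubp z (Walk.support_takeUntil_subset _ _ hz)) _ _
    rintro ⟨y, hy⟩ ⟨y', hy'⟩
    exact (reach_a y hy).trans (reach_a y' hy').symm
  · -- no cutvertex
    intro x _
    have escape : ∀ (y : V) (hy : y ∈ S' \ {x}),
        ∃ s, ∃ _ : s ∈ S \ {x}, ∃ hs' : s ∈ S' \ {x},
          (G.induce (S' \ {x})).Reachable ⟨y, hy⟩ ⟨s, hs'⟩ := by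
      intro y hy
      obtain ⟨hyS', hyx⟩ := hy
      have hyx' : y ≠ x := hyx
      by_cases hyS : y ∈ S
      · exact ⟨y, ⟨hyS, hyx⟩, ⟨hyS', hyx⟩, Reachable.refl _⟩
      · have hyp : y ∈ p.support := by
          rcases hyS' with h | h
          · exact absurd h hyS
          · exact h
        -- two candidate escapes
        by_cases hcase : x ∈ (p.takeUntil y hyp).support ∨ a = x
        · -- use the forward walk to w
          have hxdrop : x ∉ (p.dropUntil y hyp).support := by
            intro hc
            rcases hcase with hcase | rfl
            · exact hyx' (path_take_drop_inter hp hyp hcase hc).symm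
            · exact hyx' ((path_take_drop_inter hp hyp
                ((p.takeUntil y hyp).start_mem_support) hc).symm)
          have hwx : w ≠ x := by
            rintro rfl
            rcases hcase with hcase | rfl
            · exact hyS (by
                have := path_take_drop_inter hp hyp hcase
                  ((p.dropUntil y hyp).end_mem_support)
                rw [← this]
                exact hwS)
            · exact hne rfl
          refine ⟨w, ⟨hwS, hwx⟩, ⟨hsub hwS, hwx⟩, ?_⟩
          exact reachable_induce_of_walk (T := S' \ {x}) (p.dropUntil y hyp)
            (fun z hz => ⟨hsubp z (Walk.support_dropUntil_subset _ _ hz),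
              fun hzx => hxdrop (hzx ▸ hz)⟩) _ _
        · push_neg at hcase
          obtain ⟨hxtake, hax⟩ := hcase
          refine ⟨a, ⟨haS, fun h => hax h⟩, ⟨hsub haS, fun h => hax h⟩, ?_⟩
          exact reachable_induce_of_walk (T := S' \ {x}) (p.takeUntil y hyp).reverse
            (fun z hz => by
              rw [Walk.support_reverse, List.mem_reverse] at hz
              exact ⟨hsubp z (Walk.support_takeUntil_subset _ _ hz),
                fun hzx => hxtake (hzx ▸ hz)⟩) _ _
    have core : ∀ (s t : V) (hs : s ∈ S \ {x}) (ht : t ∈ S \ {x})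
        (hs' : s ∈ S' \ {x}) (ht' : t ∈ S' \ {x}),
        (G.induce (S' \ {x})).Reachable ⟨s, hs'⟩ ⟨t, ht'⟩ := by
      intro s t hs ht hs' ht'
      by_cases hxS : x ∈ S
      · have := hS.2 x hxS ⟨s, hs⟩ ⟨t, ht⟩
        exact reachable_induce_mono (Set.diff_subset_diff_left hsub) this
      · have := hS.1.preconnected ⟨s, hs.1⟩ ⟨t, ht.1⟩
        exact reachable_induce_mono
          (show S ⊆ S' \ {x} from fun z hz => ⟨hsub hz, fun hzx => hxS (hzx ▸ hz)⟩) this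
    rintro ⟨y, hy⟩ ⟨y', hy'⟩
    obtain ⟨s, hsS, hs', hr⟩ := escape y hy
    obtain ⟨t, htS, ht', hr'⟩ := escape y' hy'
    exact (hr.trans (core s t hsS htS hs' ht')).trans hr'.symm

/-- Neighbours of a vertex in a connected set avoiding it all lie in one block. -/
lemma ncard_le_biconn [Fintype V] (G : SimpleGraph V) (a : V) (X : Set V) (haX : a ∉ X)
    (hconn : ∀ x ∈ X, ∀ y ∈ X, ∃ w : G.Walk x y, ∀ z ∈ w.support, z ∈ X) :
    {d | d ∈ X ∧ G.Adj a d}.ncard ≤ biconnMaxDegree G := by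
  classical
  rcases Set.eq_empty_or_nonempty {d | d ∈ X ∧ G.Adj a d} with h | ⟨d1, hd1⟩
  · rw [h, Set.ncard_empty]
    exact Nat.zero_le _
  obtain ⟨hd1X, hd1adj⟩ := hd1
  have hne1 : a ≠ d1 := hd1adj.ne
  set Fam : Set (Set V) := {S | a ∈ S ∧ d1 ∈ S ∧ GoodSet G S} with hFam
  have hgood0 : GoodSet G {a, d1} := by
    constructor
    · rw [SimpleGraph.connected_iff]
      refine ⟨?_, ⟨⟨a, Or.inl rfl⟩⟩⟩
      have hzz : ∀ (y : V) (hy : y ∈ ({a, d1} : Set V)),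
          (G.induce {a, d1}).Reachable ⟨y, hy⟩ ⟨a, Or.inl rfl⟩ := by
        intro y hy
        rcases hy with h | h
        · subst h
          exact Reachable.refl _
        · have h' : y = d1 := h
          subst h'
          exact (show (G.induce ({a, y} : Set V)).Adj ⟨y, Or.inr rfl⟩ ⟨a, Or.inl rfl⟩ from
            hd1adj.symm).reachable
      rintro ⟨z, hz⟩ ⟨z', hz'⟩
      exact (hzz z hz).trans (hzz z' hz').symm
    · intro x hx
      rintro ⟨z, hz⟩ ⟨z', hz'⟩
      have hzz : z = z' := by
        rcases hx with rfl | rfl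
        · rcases hz.1 with rfl | rfl
          · exact absurd rfl hz.2
          · rcases hz'.1 with rfl | rfl
            · exact absurd rfl hz'.2
            · rfl
        · rcases hz.1 with rfl | rfl
          · rcases hz'.1 with rfl | rfl
            · rfl
            · exact absurd rfl hz'.2
          · exact absurd rfl hz.2
      subst hzz
      exact Reachable.refl _
  have hFam0 : ({a, d1} : Set V) ∈ Fam := ⟨Or.inl rfl, Or.inr rfl, hgood0⟩
  obtain ⟨Smax, hSmax, hmax⟩ :=
    Set.Finite.exists_maximalFor Set.ncard Fam (Set.toFinite _) ⟨_, hFam0⟩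
  obtain ⟨haS, hd1S, hSgood⟩ := hSmax
  -- every neighbour of `a` in `X` is in `Smax`
  have hDsub : {d | d ∈ X ∧ G.Adj a d} ⊆ {w | w ∈ Smax ∧ G.Adj a w} := by
    rintro d2 ⟨hd2X, hd2adj⟩
    refine ⟨?_, hd2adj⟩
    by_contra hd2S
    obtain ⟨q0, hq0⟩ := hconn d2 hd2X d1 hd1X
    have hqP := q0.bypass_isPath
    have hqsub : ∀ z ∈ q0.bypass.support, z ∈ X :=
      fun z hz => hq0 z (q0.support_bypass_subset hz)
    obtain ⟨w, hwS, q', hq'p, hq'sub, hq'out⟩ := first_entry q0.bypass hqP hd1S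
    have hq'X : ∀ z ∈ q'.support, z ∈ X := fun z hz => hqsub z (hq'sub z hz)
    have haq' : a ∉ q'.support := fun hc => haX (hq'X a hc)
    have hearP : (Walk.cons hd2adj q').IsPath := by
      rw [Walk.cons_isPath_iff]
      exact ⟨hq'p, haq'⟩
    have hwX : w ∈ X := hq'X w q'.end_mem_support
    have hawne : a ≠ w := fun hc => haX (hc ▸ hwX)
    have hint : ∀ z ∈ (Walk.cons hd2adj q').support, z ≠ a → z ≠ w → z ∉ Smax := by
      intro z hz hza hzw
      rw [Walk.support_cons, List.mem_cons] at hz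
      rcases hz with rfl | hz
      · exact absurd rfl hza
      · exact hq'out z hz hzw
    have hS'good := goodSet_ear hSgood haS hwS hawne (Walk.cons hd2adj q') hearP hint
    have hmem : Smax ∪ {z | z ∈ (Walk.cons hd2adj q').support} ∈ Fam :=
      ⟨Or.inl haS, Or.inl hd1S, hS'good⟩
    have hd2mem : d2 ∈ Smax ∪ {z | z ∈ (Walk.cons hd2adj q').support} := by
      right
      show d2 ∈ (Walk.cons hd2adj q').support
      rw [Walk.support_cons]
      exact List.mem_cons_of_mem _ q'.start_mem_support
    have hss : Smax ⊂ Smax ∪ {z | z ∈ (Walk.cons hd2adj q').support} :=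
      ⟨Set.subset_union_left, fun hcon => hd2S (hcon hd2mem)⟩
    have hlt : Smax.ncard < (Smax ∪ {z | z ∈ (Walk.cons hd2adj q').support}).ncard :=
      Set.ncard_lt_ncard hss (Set.toFinite _)
    have := hmax hmem hlt.le
    omega
  have hblock : IsBlock G Smax := by
    refine ⟨⟨a, haS⟩, hSgood.1, hSgood.2, ?_⟩
    intro S' hsub' hconn' hprec'
    have hmem : S' ∈ Fam := ⟨hsub' haS, hsub' hd1S, hconn', hprec'⟩
    have h1 : Smax.ncard ≤ S'.ncard := Set.ncard_le_ncard hsub' (Set.toFinite _)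
    have h2 := hmax hmem h1
    exact (Set.eq_of_subset_of_ncard_le hsub' h2.ge (Set.toFinite _)).symm
  have hDle : {d | d ∈ X ∧ G.Adj a d}.ncard ≤ {w | w ∈ Smax ∧ G.Adj a w}.ncard :=
    Set.ncard_le_ncard hDsub (Set.toFinite _)
  have hbdd : BddAbove {d | ∃ (S : Set V) (v : V),
      IsBlock G S ∧ v ∈ S ∧ d = {w ∈ S | G.Adj v w}.ncard} := by
    refine ⟨Fintype.card V, ?_⟩
    rintro d ⟨S, v, _, _, rfl⟩
    calc {w ∈ S | G.Adj v w}.ncard ≤ (Set.univ : Set V).ncard :=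
          Set.ncard_le_ncard (Set.subset_univ _) Set.finite_univ
      _ = Fintype.card V := by rw [Set.ncard_univ, Nat.card_eq_fintype_card]
  have hmem2 : {w | w ∈ Smax ∧ G.Adj a w}.ncard ∈ {d | ∃ (S : Set V) (v : V),
      IsBlock G S ∧ v ∈ S ∧ d = {w ∈ S | G.Adj v w}.ncard} :=
    ⟨Smax, a, hblock, haS, rfl⟩
  exact hDle.trans (le_csSup hbdd hmem2)

end Blocks

section Counting

lemma count_pairs {α β : Type*} [Fintype α] [Fintype β] (P : Set (α × β)) (A : Set α)
    (k t : ℕ) (h1 : ∀ p ∈ P, p.1 ∈ A) (h2 : ∀ a ∈ A, {b | (a, b) ∈ P}.ncard ≤ k)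
    (h3 : A.ncard ≤ t) : P.ncard ≤ t * k := by
  classical
  set f : α → Finset (α × β) := fun a => ({a} : Finset α) ×ˢ {b | (a, b) ∈ P}.toFinset with hf
  have hPsub : P.toFinset ⊆ A.toFinset.biUnion f := by
    intro p hp
    rw [Set.mem_toFinset] at hp
    rw [Finset.mem_biUnion]
    refine ⟨p.1, Set.mem_toFinset.mpr (h1 p hp), ?_⟩
    rw [hf, Finset.mem_product, Finset.mem_singleton, Set.mem_toFinset]
    exact ⟨rfl, hp⟩
  calc P.ncard = P.toFinset.card := by rw [Set.ncard_eq_toFinset_card']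
    _ ≤ (A.toFinset.biUnion f).card := Finset.card_le_card hPsub
    _ ≤ ∑ a ∈ A.toFinset, (f a).card := Finset.card_biUnion_le
    _ ≤ ∑ _a ∈ A.toFinset, k := by
        refine Finset.sum_le_sum fun a ha => ?_
        rw [hf]
        simp only [Finset.card_product, Finset.card_singleton, one_mul]
        rw [← Set.ncard_eq_toFinset_card']
        exact h2 a (Set.mem_toFinset.mp ha)
    _ = A.toFinset.card * k := by rw [Finset.sum_const, smul_eq_mul]
    _ = A.ncard * k := by rw [Set.ncard_eq_toFinset_card']
    _ ≤ t * k := Nat.mul_le_mul_right _ h3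

end Counting

end EtwAux

/-- edge-treewidth is at most (biconnected maximum degree) times treewidth. -/
theorem edgeTreewidth_le_biconnMaxDegree_mul_treewidth {V : Type*} [Fintype V]
    (G : SimpleGraph V) :
    edgeTreewidth G ≤ biconnMaxDegree G * treewidthTL G := by
  classical
  rcases isEmpty_or_nonempty V with hV | hV
  · -- no vertices: no tree-layouts at all, so the infimum is `0`
    have hempty : {k | ∃ L : TreeLayout G, ∀ u : V,
        {p : V × V | L.StrictAnc p.1 u ∧ L.Anc u p.2 ∧ G.Adj p.1 p.2}.ncard ≤ k} = ∅ := by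
      rw [Set.eq_empty_iff_forall_notMem]
      rintro k ⟨L, -⟩
      exact hV.elim L.isTree.isConnected.nonempty.some
    rw [edgeTreewidth, hempty, Nat.sInf_empty]
    exact Nat.zero_le _
  · -- a trivial (linear) tree-layout always exists
    have hL0 : Nonempty (TreeLayout G) := by
      have hcard : 0 < Fintype.card V := Fintype.card_pos
      set f := Fintype.equivFin V with hf
      set R0 : EtwAux.RootedOrder V :=
        { le := fun x y => (f x : ℕ) ≤ (f y : ℕ)
          refl := fun x => le_refl _
          antisymm := fun h1 h2 => f.injective (Fin.ext (le_antisymm h1 h2))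
          trans := fun h1 h2 => le_trans h1 h2
          chain := fun _ _ => Nat.le_total _ _
          root := f.symm ⟨0, hcard⟩
          root_le := fun x => by simp } with hR0
      exact ⟨⟨R0.treeOf, R0.treeOf_isTree, R0.root, fun x y _ => by
        rcases Nat.le_total ((f x : ℕ)) ((f y : ℕ)) with h | h
        · exact Or.inl (R0.ancIn_treeOf_iff.mpr h)
        · exact Or.inr (R0.ancIn_treeOf_iff.mpr h)⟩⟩
    obtain ⟨L0⟩ := hL0
    have hne : {k | ∃ L : TreeLayout G, ∀ u : V,
        {a : V | L.StrictAnc a u ∧ ∃ d : V, L.Anc u d ∧ G.Adj a d}.ncard ≤ k}.Nonempty :=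
      ⟨(Set.univ : Set V).ncard, L0,
        fun u => Set.ncard_le_ncard (Set.subset_univ _) Set.finite_univ⟩
    have hmem : ∃ L : TreeLayout G, ∀ u : V,
        {a : V | L.StrictAnc a u ∧ ∃ d : V, L.Anc u d ∧ G.Adj a d}.ncard ≤ treewidthTL G :=
      Nat.sInf_mem hne
    obtain ⟨L, hL⟩ := hmem
    obtain ⟨L', hL'⟩ := EtwAux.exists_good_layout G L
    apply Nat.sInf_le
    refine ⟨L', fun u => ?_⟩
    have key : ∀ p : V × V,
        p ∈ {p : V × V | L'.StrictAnc p.1 u ∧ L'.Anc u p.2 ∧ G.Adj p.1 p.2} →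
        L.StrictAnc p.1 u ∧ EtwAux.leC L u p.2 :=
      fun p hp => hL' p.1 u p.2 hp.1 hp.2.1 hp.2.2
    have hcount := EtwAux.count_pairs
      {p : V × V | L'.StrictAnc p.1 u ∧ L'.Anc u p.2 ∧ G.Adj p.1 p.2}
      {a : V | L.StrictAnc a u ∧ ∃ d : V, L.Anc u d ∧ G.Adj a d}
      (biconnMaxDegree G) (treewidthTL G)
      (fun p hp => ⟨(key p hp).1, p.2, (key p hp).2.anc, hp.2.2⟩)
      (fun a ha => ?_) (hL u)
    · calc _ ≤ treewidthTL G * biconnMaxDegree G := hcount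
        _ = biconnMaxDegree G * treewidthTL G := Nat.mul_comm _ _
    · -- fibre bound via the block lemma
      have hfib : {b | (a, b) ∈ {p : V × V | L'.StrictAnc p.1 u ∧ L'.Anc u p.2 ∧
          G.Adj p.1 p.2}} ⊆ {d | d ∈ {z | EtwAux.leC L u z} ∧ G.Adj a d} :=
        fun b hb => ⟨(key (a, b) hb).2, hb.2.2⟩
      refine (Set.ncard_le_ncard hfib (Set.toFinite _)).trans ?_
      apply EtwAux.ncard_le_biconn G a {z | EtwAux.leC L u z}
      · intro hc
        exact ha.1.2 (EtwAux.anc_antisymm L ha.1.1 (EtwAux.leC.anc hc))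
      · intro x hx y hy
        obtain ⟨wx, hwx⟩ := hx
        obtain ⟨wy, hwy⟩ := hy
        refine ⟨wx.reverse.append wy, fun z hz => ?_⟩
        rw [SimpleGraph.Walk.mem_support_append_iff] at hz
        rcases hz with hz | hz
        · rw [SimpleGraph.Walk.support_reverse, List.mem_reverse] at hz
          exact EtwAux.leC_mem_support wx hwx hz
        · exact EtwAux.leC_mem_support wy hwy hz
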